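/- Suppose W is a [0,∞]-valued random variable such that for every τ > 0 the conditional distributions of (1/τ)·u_n⁻¹(‖X‖) given the event {‖X‖ > u_n(τ)} converge weakly, as n → ∞, to the law of W. Then W is uniformly distributed on [0,1]; in particular P(W < v) = v for every v ∈ [0,1]. -/

import Mathlib

open MeasureTheory Set Filter Topology ProbabilityTheory

/-- The generalized inverse `u⁻¹(z) = sup{ τ > 0 : z ≤ u(τ) }`, taken in `[0,∞]`
(so that `sup ∅ = 0`). -/
noncomputable def geninv (u : ℝ → ℝ) (z : ℝ) : ENNReal :=
  sSup {w : ENNReal | ∃ τ : ℝ, 0 < τ ∧ z ≤ u τ ∧ w = ENNReal.ofReal τ}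

lemma ofReal_le_geninv_iff {u : ℝ → ℝ} (hm : AntitoneOn u (Set.Ioi 0))
    (hlc : ∀ τ > (0:ℝ), Tendsto u (nhdsWithin τ (Set.Ioo 0 τ)) (nhds (u τ)))
    (z : ℝ) {s : ℝ} (hs : 0 < s) :
    ENNReal.ofReal s ≤ geninv u z ↔ z ≤ u s := by
  constructor
  · intro h
    haveI : (nhdsWithin s (Set.Ioo 0 s)).NeBot := by
      apply mem_closure_iff_nhdsWithin_neBot.mp
      rw [closure_Ioo hs.ne]
      exact right_mem_Icc.mpr hs.le
    refine ge_of_tendsto (hlc s hs) ?_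
    filter_upwards [self_mem_nhdsWithin] with s' hs'
    obtain ⟨hs'0, hs's⟩ := hs'
    have h1 : ENNReal.ofReal s' < geninv u z :=
      lt_of_lt_of_le ((ENNReal.ofReal_lt_ofReal_iff hs).mpr hs's) h
    obtain ⟨w, hw, hlt⟩ := lt_sSup_iff.mp h1
    obtain ⟨τ, hτ0, hzu, rfl⟩ := hw
    have hs'τ : s' ≤ τ := by
      by_contra hcon
      push_neg at hcon
      exact absurd (ENNReal.ofReal_le_ofReal hcon.le) (not_le.mpr hlt)
    exact hzu.trans (hm (Set.mem_Ioi.mpr hs'0) (Set.mem_Ioi.mpr hτ0) hs'τ)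
  · intro h
    exact le_sSup ⟨s, hs, h, rfl⟩

theorem stmt17 {Ω Ω' : Type*} [MeasurableSpace Ω] [MeasurableSpace Ω']
    (μ : Measure Ω) [IsProbabilityMeasure μ] (P : Measure Ω') [IsProbabilityMeasure P]
    {d : ℕ} (X : Ω → EuclideanSpace ℝ (Fin d)) (hX : Measurable X)
    (u : ℕ → ℝ → ℝ)
    (hmono : ∀ n, AntitoneOn (u n) (Set.Ioi 0))
    (hupos : ∀ n, ∀ τ > (0 : ℝ), 0 < u n τ)
    (hlc : ∀ n, ∀ τ > (0 : ℝ), Tendsto (u n) (nhdsWithin τ (Set.Ioo 0 τ)) (nhds (u n τ)))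
    (htail : ∀ τ > (0 : ℝ),
      Tendsto (fun n : ℕ => (n : ℝ) * (μ {ω | u n τ < ‖X ω‖}).toReal) atTop (nhds τ))
    (W : Ω' → ENNReal) (hW : Measurable W)
    (hmeas : ∀ (n : ℕ) (τ : ℝ),
      Measurable (fun ω => ENNReal.ofReal τ⁻¹ * geninv (u n) ‖X ω‖))
    (hweak : ∀ τ > (0 : ℝ), ∀ f : ENNReal → ℝ, Continuous f →
      Tendsto (fun n : ℕ =>
          ∫ z, f z ∂(Measure.map (fun ω => ENNReal.ofReal τ⁻¹ * geninv (u n) ‖X ω‖)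
            (μ[|{ω | u n τ < ‖X ω‖}])))
        atTop (nhds (∫ ω', f (W ω') ∂P))) :
    ∀ v ∈ Set.Icc (0 : ℝ) 1, (P {ω' | W ω' < ENNReal.ofReal v}).toReal = v := by
  -- the (rescaled by τ = 1, i.e. unrescaled) generalized inverse of the norm
  set g : ℕ → Ω → ENNReal := fun n ω => ENNReal.ofReal (1:ℝ)⁻¹ * geninv (u n) ‖X ω‖
    with hg_def
  have hg_eq : ∀ n ω, g n ω = geninv (u n) ‖X ω‖ := by
    intro n ω; simp [hg_def]
  have hgm : ∀ n, Measurable (g n) := fun n => hmeas n 1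
  set A : ℕ → Set Ω := fun n => {ω | u n 1 < ‖X ω‖} with hA_def
  have hA : ∀ n, MeasurableSet (A n) := fun n =>
    measurableSet_lt measurable_const hX.norm
  set B : ℕ → ℝ → Set Ω := fun n s => {ω | u n s < ‖X ω‖} with hB_def
  -- preimage identification
  have hpre : ∀ n, ∀ s : ℝ, 0 < s → g n ⁻¹' (Set.Iio (ENNReal.ofReal s)) = B n s := by
    intro n s hs
    ext ω
    simp only [Set.mem_preimage, Set.mem_Iio, hg_eq, hB_def, Set.mem_setOf_eq]
    rw [← not_le, ← not_le]
    exact not_congr (ofReal_le_geninv_iff (hmono n) (hlc n) _ hs)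
  have hBA : ∀ n, ∀ s : ℝ, s ∈ Set.Ioc (0:ℝ) 1 → B n s ⊆ A n := by
    intro n s hs ω hω
    have : u n 1 ≤ u n s :=
      hmono n (Set.mem_Ioi.mpr hs.1) (Set.mem_Ioi.mpr one_pos) hs.2
    exact lt_of_le_of_lt this hω
  -- value of the conditional pushforward on Iio
  have hval : ∀ n, ∀ s : ℝ, s ∈ Set.Ioc (0:ℝ) 1 →
      (Measure.map (g n) (μ[|A n])) (Set.Iio (ENNReal.ofReal s))
        = (μ (A n))⁻¹ * μ (B n s) := by
    intro n s hs
    rw [Measure.map_apply (hgm n) measurableSet_Iio, cond_apply (hA n) μ,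
      hpre n s hs.1, Set.inter_eq_self_of_subset_right (hBA n s hs)]
  -- the ratio converges to s
  have hratio : ∀ s : ℝ, s ∈ Set.Ioc (0:ℝ) 1 →
      Tendsto (fun n => ((μ (A n))⁻¹ * μ (B n s)).toReal) atTop (𝓝 s) := by
    intro s hs
    have h1 := htail 1 one_pos
    have hs' := htail s hs.1
    have hdiv := hs'.div h1 one_ne_zero
    rw [div_one] at hdiv
    apply hdiv.congr'
    filter_upwards [eventually_ge_atTop 1] with n hn
    have hn0 : (n : ℝ) ≠ 0 := Nat.cast_ne_zero.mpr (by omega)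
    rw [Pi.div_apply, mul_div_mul_left _ _ hn0, ENNReal.toReal_mul, ENNReal.toReal_inv,
      inv_mul_eq_div]
  -- eventual positivity of μ (A n)
  have hpos : ∀ᶠ n in atTop, μ (A n) ≠ 0 := by
    have := (htail 1 one_pos).eventually_const_lt (show (0:ℝ) < 1 by norm_num)
    filter_upwards [this] with n hn h0
    rw [hA_def] at h0
    rw [h0] at hn
    simp at hn
  obtain ⟨N, hN⟩ := eventually_atTop.mp hpos
  -- probability measures
  set νlim : ProbabilityMeasure ENNReal :=
    ⟨Measure.map W P, Measure.isProbabilityMeasure_map hW.aemeasurable⟩ with hνlim_def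
  set νs : ℕ → ProbabilityMeasure ENNReal := fun n =>
    if h : μ (A n) ≠ 0 then
      ⟨Measure.map (g n) (μ[|A n]), by
        haveI := cond_isProbabilityMeasure (μ := μ) h
        exact Measure.isProbabilityMeasure_map (hgm n).aemeasurable⟩
    else νlim with hνs_def
  have hνs_eq : ∀ n, μ (A n) ≠ 0 →
      (νs n : Measure ENNReal) = Measure.map (g n) (μ[|A n]) := by
    intro n h
    simp only [hνs_def, dif_pos h]
    exact congrArg Subtype.val (dif_pos h)
  -- weak convergence
  have htends : Tendsto νs atTop (𝓝 νlim) := by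
    rw [ProbabilityMeasure.tendsto_iff_forall_integral_tendsto]
    intro f
    have h0 := hweak 1 one_pos f f.continuous
    have hlimint : (∫ z, f z ∂(νlim : Measure ENNReal)) = ∫ ω', f (W ω') ∂P :=
      integral_map hW.aemeasurable f.continuous.aestronglyMeasurable
    rw [hlimint]
    apply h0.congr'
    filter_upwards [eventually_atTop.mpr ⟨N, hN⟩] with n hn
    rw [hνs_eq n hn]
  -- measure of Iio under νs n converges to ofReal s
  have hkey : ∀ s : ℝ, s ∈ Set.Ioc (0:ℝ) 1 →
      Tendsto (fun n => (νs n : Measure ENNReal) (Set.Iio (ENNReal.ofReal s)))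
        atTop (𝓝 (ENNReal.ofReal s)) := by
    intro s hs
    rw [← ENNReal.tendsto_toReal_iff (fun n => measure_ne_top _ _) ENNReal.ofReal_ne_top]
    rw [ENNReal.toReal_ofReal hs.1.le]
    apply (hratio s hs).congr'
    filter_upwards [eventually_atTop.mpr ⟨N, hN⟩] with n hn
    rw [hνs_eq n hn, hval n s hs]
  haveI : ∀ i, IsProbabilityMeasure ((νs i : Measure ENNReal)) := fun i => (νs i).2
  -- upper bound
  have hup : ∀ v : ℝ, v ∈ Set.Ioc (0:ℝ) 1 →
      (νlim : Measure ENNReal) (Set.Iio (ENNReal.ofReal v)) ≤ ENNReal.ofReal v := by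
    intro v hv
    have hclosed : IsClosed ((Set.Iio (ENNReal.ofReal v))ᶜ : Set ENNReal) := by
      rw [compl_Iio]; exact isClosed_Ici
    have hlimsup :=
      ProbabilityMeasure.limsup_measure_closed_le_of_tendsto htends hclosed
    have hls := le_measure_liminf_of_limsup_measure_compl_le
      (μ := (νlim : Measure ENNReal)) (μs := fun n => (νs n : Measure ENNReal))
      measurableSet_Iio hlimsup
    calc (νlim : Measure ENNReal) (Set.Iio (ENNReal.ofReal v))
        ≤ atTop.liminf fun n => (νs n : Measure ENNReal) (Set.Iio (ENNReal.ofReal v)) := hls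
      _ = ENNReal.ofReal v := (hkey v hv).liminf_eq
  -- lower bound
  have hlow : ∀ v : ℝ, v ∈ Set.Ioc (0:ℝ) 1 →
      ENNReal.ofReal v ≤ (νlim : Measure ENNReal) (Set.Iio (ENNReal.ofReal v)) := by
    intro v hv
    have hstep : ∀ s : ℝ, s ∈ Set.Ioo (0:ℝ) v →
        ENNReal.ofReal s ≤ (νlim : Measure ENNReal) (Set.Iio (ENNReal.ofReal v)) := by
      intro s hsm
      have hs : s ∈ Set.Ioc (0:ℝ) 1 := ⟨hsm.1, le_of_lt (lt_of_lt_of_le hsm.2 hv.2)⟩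
      have hlimsup := ProbabilityMeasure.limsup_measure_closed_le_of_tendsto htends
        (isClosed_Iic (a := ENNReal.ofReal s))
      have h1 : ENNReal.ofReal s
          = atTop.liminf fun n => (νs n : Measure ENNReal) (Set.Iio (ENNReal.ofReal s)) :=
        ((hkey s hs).liminf_eq).symm
      have h2 : ENNReal.ofReal s ≤ (νlim : Measure ENNReal) (Set.Iic (ENNReal.ofReal s)) := by
        have h4 : (atTop.liminf fun n => (νs n : Measure ENNReal) (Set.Iio (ENNReal.ofReal s)))
            ≤ atTop.liminf fun n => (νs n : Measure ENNReal) (Set.Iic (ENNReal.ofReal s)) :=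
          liminf_le_liminf
            (Eventually.of_forall fun n => measure_mono Set.Iio_subset_Iic_self)
        have h5 : (atTop.liminf fun n => (νs n : Measure ENNReal) (Set.Iic (ENNReal.ofReal s)))
            ≤ atTop.limsup fun n => (νs n : Measure ENNReal) (Set.Iic (ENNReal.ofReal s)) :=
          liminf_le_limsup
        conv_lhs => rw [h1]
        exact h4.trans (h5.trans hlimsup)
      refine h2.trans (measure_mono (Set.Iic_subset_Iio.mpr ?_))
      exact (ENNReal.ofReal_lt_ofReal_iff hv.1).mpr hsm.2
    set m : ℝ := ((νlim : Measure ENNReal) (Set.Iio (ENNReal.ofReal v))).toReal with hm_def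
    have hm0 : 0 ≤ m := ENNReal.toReal_nonneg
    have hvm : v ≤ m := by
      by_contra hcon
      push_neg at hcon
      have hs0 : 0 < (m + v) / 2 := by linarith
      have hsv : (m + v) / 2 < v := by linarith
      have := hstep ((m + v) / 2) ⟨hs0, hsv⟩
      have hle : (m + v) / 2 ≤ m :=
        (ENNReal.ofReal_le_iff_le_toReal (measure_ne_top _ _)).mp this
      linarith
    calc ENNReal.ofReal v ≤ ENNReal.ofReal m := ENNReal.ofReal_le_ofReal hvm
      _ = (νlim : Measure ENNReal) (Set.Iio (ENNReal.ofReal v)) := by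
          rw [hm_def, ENNReal.ofReal_toReal (measure_ne_top _ _)]
  -- conclude
  intro v hv
  rcases eq_or_lt_of_le hv.1 with h0 | h0
  · subst h0
    have hempty : {ω' | W ω' < ENNReal.ofReal 0} = ∅ := by
      ext ω'; simp
    rw [hempty, measure_empty]
    simp
  · have hmem : v ∈ Set.Ioc (0:ℝ) 1 := ⟨h0, hv.2⟩
    have hEq : (νlim : Measure ENNReal) (Set.Iio (ENNReal.ofReal v))
        = P {ω' | W ω' < ENNReal.ofReal v} := by
      show (Measure.map W P) (Set.Iio (ENNReal.ofReal v)) = _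
      rw [Measure.map_apply hW measurableSet_Iio]
      rfl
    have : (νlim : Measure ENNReal) (Set.Iio (ENNReal.ofReal v)) = ENNReal.ofReal v :=
      le_antisymm (hup v hmem) (hlow v hmem)
    rw [hEq] at this
    rw [this, ENNReal.toReal_ofReal hv.1]
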